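/- The diameter of the projection set D_{r*,B̄} is at most 2·B̄. Moreover, if ‖x^(i)‖₂ ≤ 1 and α(w*, x^(i); S) ≥ a with ‖w*‖₂ ≤ B̄, then the coefficient c_i = E_{y ~ N(⟨w*,x^(i)⟩,1,S)}[y] satisfies |c_i| ≤ B̄ + √(2·log(1/a) + 4). -/

import Mathlib

open MeasureTheory ProbabilityTheory Real
open scoped RealInnerProductSpace ENNReal

/-- The survival probability `α(μ; S) = N(μ,1)(S)`. -/
noncomputable def survival (μ : ℝ) (S : Set ℝ) : ℝ :=
  (gaussianReal μ 1 S).toReal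

/-- The truncated Gaussian `N(μ,1,S)`, i.e. `N(μ,1)` conditioned on `S`. -/
noncomputable def truncGaussian (μ : ℝ) (S : Set ℝ) : Measure ℝ :=
  (gaussianReal μ 1)[|S]

/-- The projection set `D_{r,B}`: the Loewner-order constraint
`∑ᵢ (yⁱ − ⟨w,xⁱ⟩)² xⁱ xⁱᵀ ⪯ r ∑ᵢ xⁱ xⁱᵀ` (expressed via quadratic forms)
together with `‖w‖₂ ≤ B`. -/
def projSet {k n : ℕ} (x : Fin n → EuclideanSpace ℝ (Fin k)) (y : Fin n → ℝ)
    (r B : ℝ) : Set (EuclideanSpace ℝ (Fin k)) :=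
  {w | (∀ v : EuclideanSpace ℝ (Fin k),
      ∑ i, (y i - ⟪w, x i⟫) ^ 2 * ⟪v, x i⟫ ^ 2 ≤ r * ∑ i, ⟪v, x i⟫ ^ 2) ∧ ‖w‖ ≤ B}

open Set

namespace Stmt18Aux

noncomputable def pdf0 (z : ℝ) : ℝ := (Real.sqrt (2*π))⁻¹ * Real.exp (-z^2/2)

lemma pdf0_eq (z : ℝ) : gaussianPDFReal 0 1 z = pdf0 z := by
  simp [gaussianPDFReal, pdf0, neg_div]

lemma pdf0_nonneg (z : ℝ) : 0 ≤ pdf0 z :=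
  mul_nonneg (inv_nonneg.2 (Real.sqrt_nonneg _)) (Real.exp_nonneg _)

lemma gauss0_eq : gaussianReal 0 1 =
    (volume : Measure ℝ).withDensity (fun z => ((pdf0 z).toNNReal : ℝ≥0∞)) := by
  rw [gaussianReal_of_var_ne_zero 0 one_ne_zero]
  congr 1
  ext z
  rw [gaussianPDF, pdf0_eq, ENNReal.ofReal]

lemma meas_pdf0 : Measurable fun z => (pdf0 z).toNNReal := by
  unfold pdf0
  fun_prop

lemma integral_gauss0 (g : ℝ → ℝ) : ∫ z, g z ∂(gaussianReal 0 1) = ∫ z, pdf0 z * g z := by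
  rw [gauss0_eq, integral_withDensity_eq_integral_smul meas_pdf0]
  congr 1; ext z
  simp [NNReal.smul_def, Real.coe_toNNReal _ (pdf0_nonneg z)]

lemma integrable_gauss0_iff (g : ℝ → ℝ) : Integrable g (gaussianReal 0 1) ↔
    Integrable (fun z => pdf0 z * g z) := by
  rw [gauss0_eq, integrable_withDensity_iff_integrable_smul meas_pdf0]
  constructor <;> intro h <;> [skip; skip] <;>
    · refine h.congr (Filter.Eventually.of_forall fun z => ?_)
      simp [NNReal.smul_def, Real.coe_toNNReal _ (pdf0_nonneg z)]

lemma integrable_id_gauss0 : Integrable (fun z => z) (gaussianReal 0 1) := by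
  rw [integrable_gauss0_iff]
  have h := (integrable_rpow_mul_exp_neg_mul_sq (b := 1/2) one_half_pos (s := 1)
    (by norm_num)).const_mul (Real.sqrt (2*π))⁻¹
  refine h.congr (Filter.Eventually.of_forall fun z => ?_)
  simp [pdf0]
  ring_nf

lemma integrable_sq_gauss0 : Integrable (fun z : ℝ => z^2) (gaussianReal 0 1) := by
  rw [integrable_gauss0_iff]
  have h := (integrable_rpow_mul_exp_neg_mul_sq (b := 1/2) one_half_pos (s := 2)
    (by norm_num)).const_mul (Real.sqrt (2*π))⁻¹
  refine h.congr (Filter.Eventually.of_forall fun z => ?_)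
  simp [pdf0]
  ring_nf

lemma integrable_max_gauss0 (T : ℝ) :
    Integrable (fun z => max (z^2 - T^2) 0) (gaussianReal 0 1) := by
  refine integrable_sq_gauss0.mono ?_ (Filter.Eventually.of_forall fun z => ?_)
  · exact (continuous_id.pow 2 |>.sub continuous_const).max continuous_const
      |>.aestronglyMeasurable
  · rw [Real.norm_eq_abs, Real.norm_eq_abs, abs_of_nonneg (le_max_right _ _),
      abs_of_nonneg (sq_nonneg z)]
    rcases le_or_gt (z^2 - T^2) 0 with h | h
    · simp [max_eq_right h]; positivity
    · rw [max_eq_left h.le]; nlinarith [sq_nonneg T]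

lemma cs_integral {ν : Measure ℝ} [IsFiniteMeasure ν] {f : ℝ → ℝ}
    (hf : Integrable f ν) (hf2 : Integrable (fun z => (f z)^2) ν) :
    (∫ z, f z ∂ν)^2 ≤ (ν Set.univ).toReal * ∫ z, (f z)^2 ∂ν := by
  set m := (ν Set.univ).toReal with hm
  have hm0 : 0 ≤ m := ENNReal.toReal_nonneg
  rcases eq_or_lt_of_le hm0 with h0 | h0
  · have : ν = 0 := by
      have := (ENNReal.toReal_eq_zero_iff _).1 h0.symm
      rcases this with h | h
      · exact Measure.measure_univ_eq_zero.1 h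
      · exact absurd h (measure_ne_top ν _)
    simp [this]
  · set I := ∫ z, f z ∂ν with hI
    set c := I / m with hc
    have key : 0 ≤ ∫ z, (f z - c)^2 ∂ν := integral_nonneg fun z => sq_nonneg _
    have expand : ∫ z, (f z - c)^2 ∂ν = (∫ z, (f z)^2 ∂ν) - 2*c*I + c^2*m := by
      have h1 : ∀ z, (f z - c)^2 = (f z)^2 - (2*c) * f z + c^2 := by intro z; ring
      simp_rw [h1]
      have hA : Integrable (fun z => f z ^ 2 - 2 * c * f z) ν := hf2.sub (hf.const_mul (2*c))
      rw [integral_add hA (integrable_const _),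
        integral_sub hf2 (hf.const_mul (2*c)), integral_const_mul, integral_const]
      simp [hm, hI, smul_eq_mul, mul_comm, measureReal_def]
    rw [expand] at key
    have hcm : c * m = I := by rw [hc]; exact div_mul_cancel₀ I h0.ne'
    nlinarith [sq_nonneg c, sq_nonneg I]

lemma intOn_s_exp {T : ℝ} (hT : 0 < T) :
    IntegrableOn (fun s : ℝ => s * Real.exp (-(T*s))) (Ioi 0) := by
  have h := integrableOn_rpow_mul_exp_neg_mul_rpow (s := 1) (p := 1) (b := T)
    (by norm_num) (by norm_num) hT
  refine h.congr_fun (fun s _ => ?_) measurableSet_Ioi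
  simp [Real.rpow_one]

lemma intOn_s2_exp {T : ℝ} (hT : 0 < T) :
    IntegrableOn (fun s : ℝ => s^2 * Real.exp (-(T*s))) (Ioi 0) := by
  have h := integrableOn_rpow_mul_exp_neg_mul_rpow (s := 2) (p := 1) (b := T)
    (by norm_num) (by norm_num) hT
  refine h.congr_fun (fun s _ => ?_) measurableSet_Ioi
  simp only [pow_one, Real.rpow_one]
  rw [show ((2:ℝ)) = ((2:ℕ):ℝ) by norm_num, Real.rpow_natCast]
  ring_nf

lemma val_s_exp {T : ℝ} (hT : 0 < T) :
    ∫ s in Ioi (0:ℝ), s * Real.exp (-(T*s)) = 1/T^2 := by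
  have h := integral_rpow_mul_exp_neg_mul_Ioi (a := 2) (by norm_num) hT
  rw [show ((2:ℝ)) - 1 = 1 by norm_num] at h
  simp only [Real.rpow_one] at h
  rw [h, Real.Gamma_two, mul_one, show ((2:ℝ)) = ((2:ℕ):ℝ) by norm_num, Real.rpow_natCast]
  norm_num

lemma val_s2_exp {T : ℝ} (hT : 0 < T) :
    ∫ s in Ioi (0:ℝ), s^2 * Real.exp (-(T*s)) = 2/T^3 := by
  have h := integral_rpow_mul_exp_neg_mul_Ioi (a := 3) (by norm_num) hT
  rw [show ((3:ℝ)) - 1 = ((2:ℕ):ℝ) by norm_num] at h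
  simp only [Real.rpow_natCast] at h
  have hg3 : Real.Gamma 3 = 2 := by
    rw [show (3:ℝ) = ((2:ℕ):ℝ) + 1 by norm_num, Real.Gamma_nat_eq_factorial]; norm_num
  rw [h, hg3, show ((3:ℝ)) = ((3:ℕ):ℝ) by norm_num, Real.rpow_natCast]
  field_simp

lemma K_bound {T : ℝ} (hT : Real.sqrt 2 ≤ T) :
    ∫ z, max (z^2 - T^2) 0 ∂(gaussianReal 0 1) ≤
      2 * Real.exp 1 * Real.exp (-(T^2)/2) := by
  have hT14 : (1.4:ℝ) ≤ T := le_trans (by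
    rw [show (1.4:ℝ) = Real.sqrt (1.4^2) by rw [Real.sqrt_sq]; norm_num]
    exact Real.sqrt_le_sqrt (by norm_num)) hT
  have hT0 : 0 < T := lt_of_lt_of_le (by norm_num) hT14
  set c : ℝ := (Real.sqrt (2*π))⁻¹ * Real.exp (-(T^2)/2) with hc
  have hc0 : 0 ≤ c := mul_nonneg (inv_nonneg.2 (Real.sqrt_nonneg _)) (Real.exp_nonneg _)
  rw [integral_gauss0]
  set g : ℝ → ℝ := fun t => pdf0 t * max (t^2 - T^2) 0 with hg
  have habs : ∀ z, g |z| = g z := by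
    intro z; simp only [hg, pdf0, sq_abs]
  have h1 : ∫ z, g z = 2 * ∫ t in Ioi (0:ℝ), g t := by
    rw [← integral_comp_abs (f := g)]
    exact integral_congr_ae (Filter.Eventually.of_forall fun z => (habs z).symm)
  have h2 : ∫ t in Ioi (0:ℝ), g t = ∫ t in Ioi T, g t := by
    refine setIntegral_eq_of_subset_of_forall_diff_eq_zero (μ := volume) (f := g)
      (s := Ioi T) (t := Ioi 0) measurableSet_Ioi (Ioi_subset_Ioi hT0.le) fun z hz => ?_
    obtain ⟨hz0, hzT⟩ := hz
    have : z ≤ T := not_lt.1 hzT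
    have : z^2 - T^2 ≤ 0 := by nlinarith [(mem_Ioi.1 hz0).le]
    simp [hg, max_eq_right this]
  have A : MeasurableEmbedding (fun s : ℝ => s + T) :=
    (Homeomorph.addRight T).isClosedEmbedding.measurableEmbedding
  have h3 : ∫ t in Ioi T, g t = ∫ s in Ioi (0:ℝ), g (s + T) := by
    conv_lhs => rw [show (volume : Measure ℝ) = Measure.map (fun s => s + T) volume from
      (Measure.IsAddRightInvariant.map_add_right_eq_self T).symm]
    rw [A.setIntegral_map]
    congr 1
    ext u; simp
  have key : ∫ s in Ioi (0:ℝ), g (s + T) ≤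
      ∫ s in Ioi (0:ℝ), c * ((2*T*s + s^2) * Real.exp (-(T*s))) := by
    have hint : IntegrableOn (fun s : ℝ => c * ((2*T*s + s^2) * Real.exp (-(T*s)))) (Ioi 0) := by
      have h := ((intOn_s_exp hT0).const_mul (c*(2*T))).add ((intOn_s2_exp hT0).const_mul c)
      refine h.congr (Filter.Eventually.of_forall fun s => ?_)
      simp only [Pi.add_apply]
      ring
    refine integral_mono_of_nonneg (Filter.Eventually.of_forall fun s => ?_) hint ?_
    · exact mul_nonneg (pdf0_nonneg _) (le_max_right _ _)
    · rw [Filter.EventuallyLE, ae_restrict_iff' measurableSet_Ioi]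
      refine Filter.Eventually.of_forall fun s hs => ?_
      have hs0 : 0 < s := hs
      have hmax : max ((s+T)^2 - T^2) 0 = 2*T*s + s^2 := by
        rw [max_eq_left (by nlinarith)]; ring
      have hpdf : pdf0 (s+T) ≤ c * Real.exp (-(T*s)) := by
        rw [hc, pdf0, mul_assoc, ← Real.exp_add]
        refine mul_le_mul_of_nonneg_left (Real.exp_le_exp.2 (by nlinarith))
          (inv_nonneg.2 (Real.sqrt_nonneg _))
      calc g (s+T) = pdf0 (s+T) * (2*T*s + s^2) := by rw [hg]; simp only; rw [hmax]
        _ ≤ (c * Real.exp (-(T*s))) * (2*T*s + s^2) :=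
            mul_le_mul_of_nonneg_right hpdf (by nlinarith)
        _ = c * ((2*T*s + s^2) * Real.exp (-(T*s))) := by ring
  have hval : ∫ s in Ioi (0:ℝ), c * ((2*T*s + s^2) * Real.exp (-(T*s))) =
      c * (2/T + 2/T^3) := by
    rw [integral_const_mul]
    congr 1
    have : ∀ s : ℝ, (2*T*s + s^2) * Real.exp (-(T*s)) =
        (2*T) * (s * Real.exp (-(T*s))) + s^2 * Real.exp (-(T*s)) := fun s => by ring
    rw [integral_congr_ae (Filter.Eventually.of_forall fun s => this s),
      integral_add ((intOn_s_exp hT0).const_mul (2*T)) (intOn_s2_exp hT0),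
      integral_const_mul, val_s_exp hT0, val_s2_exp hT0]
    field_simp
  have hnum : c * (2/T + 2/T^3) ≤ Real.exp 1 * Real.exp (-(T^2)/2) := by
    have hsq : (1:ℝ) ≤ Real.sqrt (2*π) := by
      rw [show (1:ℝ) = Real.sqrt 1 by simp]
      exact Real.sqrt_le_sqrt (by nlinarith [Real.pi_gt_three])
    have hinv : (Real.sqrt (2*π))⁻¹ ≤ 1 := by
      rw [inv_le_one_iff₀]; right; exact hsq
    have hsum : 2/T + 2/T^3 ≤ 2.2 := by
      have h1 : 2/T ≤ 2/1.4 := by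
        apply div_le_div_of_nonneg_left (by norm_num) (by norm_num) hT14
      have h2 : 2/T^3 ≤ 2/1.4^3 := by
        apply div_le_div_of_nonneg_left (by norm_num) (by norm_num) (by nlinarith)
      norm_num at h1 h2 ⊢
      linarith
    have he : (2.2:ℝ) ≤ Real.exp 1 := by
      have := Real.exp_one_gt_d9; linarith
    calc c * (2/T + 2/T^3) ≤ 1 * Real.exp (-(T^2)/2) * 2.2 := by
          rw [hc]
          have h0 : (0:ℝ) ≤ 2/T + 2/T^3 := by positivity
          exact mul_le_mul (mul_le_mul_of_nonneg_right hinv (Real.exp_nonneg _)) hsum h0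
            (by positivity)
      _ ≤ Real.exp 1 * Real.exp (-(T^2)/2) := by
          rw [one_mul]
          rw [mul_comm (Real.exp 1)]
          exact mul_le_mul_of_nonneg_left he (Real.exp_nonneg _)
  calc ∫ z, g z = 2 * ∫ s in Ioi (0:ℝ), g (s + T) := by rw [h1, h2, h3]
    _ ≤ 2 * (c * (2/T + 2/T^3)) := by rw [← hval]; linarith [key]
    _ ≤ 2 * (Real.exp 1 * Real.exp (-(T^2)/2)) := by linarith [hnum]
    _ = 2 * Real.exp 1 * Real.exp (-(T^2)/2) := by ring

lemma key_bound (S' : Set ℝ) (hS' : MeasurableSet S') {a : ℝ} (ha0 : 0 < a) (ha1 : a < 1)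
    (hpa : a ≤ ((gaussianReal 0 1) S').toReal) :
    |((gaussianReal 0 1) S').toReal⁻¹ * ∫ z in S', z ∂(gaussianReal 0 1)| ≤
      Real.sqrt (2 * Real.log (1/a) + 4) := by
  set γ := gaussianReal 0 1 with hγ
  set p := (γ S').toReal with hp
  have hp0 : 0 < p := lt_of_lt_of_le ha0 hpa
  have hp1 : p ≤ 1 := by
    have h := prob_le_one (μ := γ) (s := S')
    simpa [hp] using ENNReal.toReal_mono ENNReal.one_ne_top h
  have hlog : 0 ≤ Real.log (1/p) := Real.log_nonneg (one_le_one_div hp0 hp1)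
  set T := Real.sqrt (2*Real.log (1/p) + 2) with hT
  have hT2 : T^2 = 2*Real.log (1/p) + 2 := Real.sq_sqrt (by linarith)
  have hTge : Real.sqrt 2 ≤ T := by
    apply Real.sqrt_le_sqrt; linarith
  have hT0 : 0 < T := lt_of_lt_of_le (by positivity) hTge
  set I := ∫ z in S', z ∂γ with hI
  set J := ∫ z in S', z^2 ∂γ with hJ
  have hJ0 : 0 ≤ J := setIntegral_nonneg hS' fun z _ => sq_nonneg z
  have hCS : I^2 ≤ p * J := by
    have h := cs_integral (ν := γ.restrict S') (f := fun z => z)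
      (integrable_id_gauss0.restrict) (integrable_sq_gauss0.restrict)
    rwa [Measure.restrict_apply_univ] at h
  set K := ∫ z, max (z^2 - T^2) 0 ∂γ with hK
  have hKp : K ≤ 2 * p := by
    have h := K_bound hTge
    have hexp : Real.exp (-(T^2)/2) = p * Real.exp (-1) := by
      rw [hT2, show -(2*Real.log (1/p) + 2)/2 = -Real.log (1/p) + (-1) by ring,
        Real.exp_add, one_div, Real.log_inv, neg_neg, Real.exp_log hp0]
    rw [hexp] at h
    calc K ≤ 2 * Real.exp 1 * (p * Real.exp (-1)) := h
      _ = 2 * p * (Real.exp 1 * Real.exp (-1)) := by ring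
      _ = 2 * p := by rw [← Real.exp_add]; simp
  have hJle : J ≤ T^2 * p + K := by
    have step1 : J ≤ ∫ z in S', (T^2 + max (z^2 - T^2) 0) ∂γ := by
      refine integral_mono_of_nonneg (Filter.Eventually.of_forall fun z => sq_nonneg z)
        ((integrable_const _).add ((integrable_max_gauss0 T).restrict))
        (Filter.Eventually.of_forall fun z => ?_)
      simp only
      rcases le_or_gt (z^2 - T^2) 0 with h | h
      · rw [max_eq_right h]; linarith
      · rw [max_eq_left h.le]; linarith
    have step2 : ∫ z in S', (T^2 + max (z^2 - T^2) 0) ∂γ =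
        T^2 * p + ∫ z in S', max (z^2 - T^2) 0 ∂γ := by
      rw [integral_add (integrable_const _) ((integrable_max_gauss0 T).restrict),
        setIntegral_const]
      simp [hp, hγ, smul_eq_mul, mul_comm, measureReal_def]
    have step3 : ∫ z in S', max (z^2 - T^2) 0 ∂γ ≤ K :=
      setIntegral_le_integral (integrable_max_gauss0 T)
        (Filter.Eventually.of_forall fun z => le_max_right _ _)
    linarith
  have hm2 : (p⁻¹ * I)^2 ≤ 2*Real.log (1/a) + 4 := by
    have h1 : (p⁻¹ * I)^2 = I^2 / p^2 := by field_simp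
    have h2 : I^2 / p^2 ≤ J / p := by
      rw [div_le_div_iff₀ (by positivity) hp0]
      calc I^2 * p ≤ (p*J) * p := by nlinarith
        _ = J * p^2 := by ring
    have h3 : J / p ≤ T^2 + 2 := by
      rw [div_le_iff₀ hp0]
      nlinarith
    have h4 : Real.log (1/p) ≤ Real.log (1/a) := by
      apply Real.log_le_log (by positivity)
      exact one_div_le_one_div_of_le ha0 hpa
    rw [h1]
    calc I^2/p^2 ≤ J/p := h2
      _ ≤ T^2 + 2 := h3
      _ = 2*Real.log (1/p) + 4 := by rw [hT2]; ring
      _ ≤ 2*Real.log (1/a) + 4 := by linarith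
  calc |p⁻¹ * I| = Real.sqrt ((p⁻¹ * I)^2) := (Real.sqrt_sq_eq_abs _).symm
    _ ≤ Real.sqrt (2*Real.log (1/a) + 4) := Real.sqrt_le_sqrt hm2

end Stmt18Aux

open Stmt18Aux in
theorem stmt18 {k n : ℕ} (S : Set ℝ) (hS : MeasurableSet S)
    (x : Fin n → EuclideanSpace ℝ (Fin k)) (y : Fin n → ℝ)
    (wstar : EuclideanSpace ℝ (Fin k)) (a Bbar : ℝ)
    (ha0 : 0 < a) (ha1 : a < 1) (hB : 0 < Bbar)
    (rstar : ℝ) (hrstar : rstar = 4 * Real.log (2 / a) + 7) :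
    (∀ w ∈ projSet x y rstar Bbar, ∀ w' ∈ projSet x y rstar Bbar,
        ‖w - w'‖ ≤ 2 * Bbar) ∧
    (‖wstar‖ ≤ Bbar → ∀ i : Fin n, ‖x i‖ ≤ 1 → a ≤ survival ⟪wstar, x i⟫ S →
        |∫ y', y' ∂(truncGaussian ⟪wstar, x i⟫ S)| ≤
          Bbar + Real.sqrt (2 * Real.log (1 / a) + 4)) := by
  constructor
  · intro w hw w' hw'
    calc ‖w - w'‖ ≤ ‖w‖ + ‖w'‖ := norm_sub_le _ _
      _ ≤ Bbar + Bbar := add_le_add hw.2 hw'.2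
      _ = 2 * Bbar := by ring
  · intro hw i hxi hα
    set μ0 : ℝ := ⟪wstar, x i⟫ with hμ0def
    have hμ0 : |μ0| ≤ Bbar := by
      calc |μ0| ≤ ‖wstar‖ * ‖x i‖ := abs_real_inner_le_norm wstar (x i)
        _ ≤ Bbar * 1 := mul_le_mul hw hxi (norm_nonneg _) hB.le
        _ = Bbar := mul_one _
    set γμ := gaussianReal μ0 1 with hγμ
    set γ0 := gaussianReal 0 1 with hγ0
    set S' := (fun z : ℝ => z + μ0) ⁻¹' S with hS'def
    have hS' : MeasurableSet S' := hS.preimage (measurable_add_const μ0)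
    have hmap : Measure.map (fun z : ℝ => z + μ0) γ0 = γμ := by
      have := gaussianReal_map_add_const (μ := 0) (v := 1) μ0
      simpa using this
    have hPS : γμ S = γ0 S' := by
      rw [← hmap, Measure.map_apply (measurable_add_const μ0) hS]
    set p := (γμ S).toReal with hp
    have hpa : a ≤ p := hα
    have hp0 : 0 < p := lt_of_lt_of_le ha0 hpa
    have hrestr : γμ.restrict S = Measure.map (fun z : ℝ => z + μ0) (γ0.restrict S') := by
      rw [← hmap, Measure.restrict_map (measurable_add_const μ0) hS]
    have hint : ∫ y', y' ∂(truncGaussian μ0 S) = p⁻¹ * ((∫ z in S', z ∂γ0) + μ0 * p) := by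
      rw [truncGaussian, ProbabilityTheory.cond, integral_smul_measure, hrestr,
        integral_map (measurable_add_const μ0).aemeasurable
          measurable_id'.aestronglyMeasurable,
        ENNReal.toReal_inv]
      congr 1
      rw [integral_add (integrable_id_gauss0.restrict) (integrable_const _), integral_const,
        measureReal_def, Measure.restrict_apply_univ, smul_eq_mul, hp, hPS, mul_comm]
    have hp' : p = (γ0 S').toReal := by rw [hp, hPS]
    have hkey := key_bound S' hS' ha0 ha1 (by rw [← hp']; exact hpa)
    rw [← hp'] at hkey
    have heq : ∫ y', y' ∂(truncGaussian μ0 S) = p⁻¹ * (∫ z in S', z ∂γ0) + μ0 := by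
      rw [hint]; field_simp
    rw [heq]
    calc |p⁻¹ * (∫ z in S', z ∂γ0) + μ0| ≤ |p⁻¹ * (∫ z in S', z ∂γ0)| + |μ0| := abs_add_le _ _
      _ ≤ Real.sqrt (2 * Real.log (1/a) + 4) + Bbar := add_le_add hkey hμ0
      _ = Bbar + Real.sqrt (2 * Real.log (1/a) + 4) := by ring
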